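/- For all spanoids S₁ on a finite set X₁ and S₂ on a finite set X₂: LP^entropy(S₁ ⋉ S₂) ≤ LP^entropy(S₁) · LP^entropy(S₂), where ⋉ denotes the semi-direct product of spanoids. -/

import Mathlib

open scoped BigOperators

/-- A spanoid on ground set `X`: a set of inference rules `(A, i)`,
read as "`A` spans `i`". -/
abbrev SpanoidOn (X : Type) : Type := Set (Set X × X)

/-- The span of `T`: the smallest superset `T'` of `T` such that whenever `(A, i)` is a
rule with `A ⊆ T'`, also `i ∈ T'`. -/
def sSpan {X : Type} (S : SpanoidOn X) (T : Set X) : Set X :=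
  ⋂₀ {T' : Set X | T ⊆ T' ∧ ∀ p ∈ S, p.1 ⊆ T' → p.2 ∈ T'}

/-- The rank of a spanoid: the minimum size of a subset spanning the whole ground set. -/
noncomputable def sRank {X : Type} [Fintype X] (S : SpanoidOn X) : ℕ :=
  sInf {k : ℕ | ∃ T : Set X, T.ncard = k ∧ sSpan S T = Set.univ}

/-- A set is closed if it equals its own span. -/
def sClosed {X : Type} (S : SpanoidOn X) (B : Set X) : Prop := sSpan S B = B

/-- A set is open if its complement is closed. -/
def sOpen {X : Type} (S : SpanoidOn X) (B : Set X) : Prop := sClosed S Bᶜ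

/-- A code `C ⊆ K^X` is consistent with the spanoid `S` if for every rule `(A, i)` of `S`
there is a function `g` with `c i = g (c|_A)` for all codewords `c ∈ C`. -/
def sConsistent {X K : Type} (S : SpanoidOn X) (C : Set (X → K)) : Prop :=
  ∀ p ∈ S, ∃ g : (↥p.1 → K) → K, ∀ c ∈ C, c p.2 = g (fun a => c a.1)

/-- The functional rank of a spanoid: the supremum of `log |C| / log |Σ|` over all finite
alphabets `Σ` (of size at least 2) and all codes `C ⊆ Σ^X` consistent with `S`. -/
noncomputable def sFrank {X : Type} (S : SpanoidOn X) : ℝ :=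
  sSup {d : ℝ | ∃ m : ℕ, 2 ≤ m ∧ ∃ C : Set (X → Fin m),
    sConsistent S C ∧ d = Real.log (Nat.card C) / Real.log m}

/-- Feasibility for the entropy linear program of a spanoid. -/
def sEntFeasible {X : Type} (S : SpanoidOn X) (f : Set X → ℝ) : Prop :=
  f ∅ = 0 ∧ (∀ i : X, f {i} ≤ 1) ∧
  (∀ A B : Set X, f (A ∪ B) + f (A ∩ B) ≤ f A + f B) ∧
  (∀ A B : Set X, A ⊆ B → f A ≤ f B) ∧
  (∀ A : Set X, ∀ i ∈ sSpan S A, f (A ∪ {i}) = f A)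

/-- The optimum of the entropy linear program: maximize `f(X)` over feasible `f`. -/
noncomputable def sLPentropy {X : Type} (S : SpanoidOn X) : ℝ :=
  sSup {y : ℝ | ∃ f : Set X → ℝ, sEntFeasible S f ∧ y = f Set.univ}

/-- The optimum of the covering linear program: minimize `∑ i, x i` over `x ≥ 0` such that
`∑_{i ∈ B} x i ≥ 1` for every nonempty open set `B`. -/
noncomputable def sLPcover {X : Type} [Fintype X] (S : SpanoidOn X) : ℝ :=
  sInf {y : ℝ | ∃ x : X → ℝ, (∀ i, 0 ≤ x i) ∧
    (∀ B : Set X, B.Nonempty → sOpen S B → 1 ≤ ∑ i, B.indicator x i) ∧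
    y = ∑ i, x i}

/-- A spanoid on `[n]` is a `q`-LCS with error-tolerance `δ` if every `i` is spanned by at
least `δ n` pairwise disjoint `q`-element subsets. -/
def sIsLCS {n : ℕ} (q : ℕ) (δ : ℝ) (S : SpanoidOn (Fin n)) : Prop :=
  ∀ i : Fin n, ∃ M : Finset (Finset (Fin n)),
    δ * n ≤ (M.card : ℝ) ∧
    (∀ A ∈ M, A.card = q) ∧
    ((M : Set (Finset (Fin n))).Pairwise fun A B => Disjoint A B) ∧
    ∀ A ∈ M, ((A : Set (Fin n)), i) ∈ S

/-- The semi-direct product `S₁ ⋉ S₂` on `X₁ × X₂`: whenever `A ⊨ i` in `S₁` and `j ∈ X₂`,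
the rule `(A × X₂, (i,j))`; and whenever `B ⊨ j` in `S₂` and `i ∈ X₁`, the rule
`({i} × B, (i,j))`. -/
def semidirect {X₁ X₂ : Type} (S₁ : SpanoidOn X₁) (S₂ : SpanoidOn X₂) :
    SpanoidOn (X₁ × X₂) :=
  {p | (∃ (A : Set X₁) (i : X₁) (j : X₂), i ∈ sSpan S₁ A ∧
          p = (A ×ˢ (Set.univ : Set X₂), (i, j))) ∨
       (∃ (B : Set X₂) (i : X₁) (j : X₂), j ∈ sSpan S₂ B ∧
          p = (({i} : Set X₁) ×ˢ B, (i, j)))}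

-- span lemmas
lemma subset_sSpan {X : Type} (S : SpanoidOn X) (T : Set X) : T ⊆ sSpan S T :=
  Set.subset_sInter fun _ hT' => hT'.1

lemma sSpan_rule {X : Type} {S : SpanoidOn X} {T : Set X} {p : Set X × X}
    (hp : p ∈ S) (hsub : p.1 ⊆ sSpan S T) : p.2 ∈ sSpan S T := by
  intro T' hT'
  exact hT'.2 p hp (hsub.trans (Set.sInter_subset_of_mem hT'))

lemma sSpan_mono {X : Type} (S : SpanoidOn X) {T U : Set X} (h : T ⊆ U) :
    sSpan S T ⊆ sSpan S U := fun x hx T' hT' => hx T' ⟨h.trans hT'.1, hT'.2⟩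

-- union with spanned finite set
lemma f_union_spanned {X : Type} {S : SpanoidOn X} {f : Set X → ℝ}
    (hspan : ∀ A : Set X, ∀ i ∈ sSpan S A, f (A ∪ {i}) = f A)
    (T : Set X) (D : Set X) (hD : D.Finite) (hDs : D ⊆ sSpan S T) :
    f (T ∪ D) = f T := by
  revert hDs
  refine Set.Finite.induction_on _ hD (fun _ => by simp) ?_
  intro x D' hnx hD' ih hins
  have hx : x ∈ sSpan S T := hins (Set.mem_insert x D')
  have hsubD : D' ⊆ sSpan S T := fun y hy => hins (Set.mem_insert_of_mem x hy)
  have h1 : x ∈ sSpan S (T ∪ D') := sSpan_mono S Set.subset_union_left hx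
  have heq : T ∪ insert x D' = (T ∪ D') ∪ {x} := by
    rw [Set.union_singleton, Set.union_insert]
  rw [heq, hspan _ x h1, ih hsubD]

-- cardinality bound
lemma f_le_card {X : Type} {f : Set X → ℝ} {c : ℝ}
    (h0 : f ∅ = 0) (hsing : ∀ i : X, f {i} ≤ c)
    (hsub : ∀ A B : Set X, f (A ∪ B) + f (A ∩ B) ≤ f A + f B) :
    ∀ A : Set X, A.Finite → f A ≤ A.ncard * c := by
  intro A hA
  refine Set.Finite.induction_on _ hA (by simp [h0]) ?_
  intro x D hx hD ih
  · have h1 := hsub D {x}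
    have h2 : D ∩ {x} = ∅ := by
      ext y; simp only [Set.mem_inter_iff, Set.mem_singleton_iff, Set.mem_empty_iff_false,
        iff_false, not_and]
      rintro hy rfl; exact hx hy
    rw [h2, h0, add_zero, Set.union_singleton] at h1
    have h3 := (h1.trans (add_le_add ih (hsing x)))
    rw [Set.ncard_insert_of_notMem hx hD]
    push_cast
    linarith

lemma zero_mem_LPset {X : Type} (S : SpanoidOn X) :
    (0 : ℝ) ∈ {y : ℝ | ∃ f : Set X → ℝ, sEntFeasible S f ∧ y = f Set.univ} := by
  refine ⟨fun _ => 0, ⟨rfl, fun _ => by norm_num, fun _ _ => by norm_num,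
    fun _ _ _ => le_rfl, fun _ _ _ => rfl⟩, rfl⟩

lemma bddAbove_LPset {X : Type} [Fintype X] (S : SpanoidOn X) :
    BddAbove {y : ℝ | ∃ f : Set X → ℝ, sEntFeasible S f ∧ y = f Set.univ} := by
  refine ⟨(Fintype.card X : ℝ), ?_⟩
  rintro y ⟨f, ⟨h0, hsing, hsub, _, _⟩, rfl⟩
  have := f_le_card h0 hsing hsub Set.univ (Set.finite_univ)
  simpa [Set.ncard_univ, Nat.card_eq_fintype_card] using this

lemma sLPentropy_nonneg {X : Type} [Fintype X] (S : SpanoidOn X) :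
    0 ≤ sLPentropy S :=
  le_csSup (bddAbove_LPset S) (zero_mem_LPset S)

-- key scaling lemma
lemma key {X : Type} [Fintype X] (S : SpanoidOn X) (g : Set X → ℝ) (c : ℝ) (hc : 0 ≤ c)
    (h0 : g ∅ = 0) (hsing : ∀ i : X, g {i} ≤ c)
    (hsub : ∀ A B : Set X, g (A ∪ B) + g (A ∩ B) ≤ g A + g B)
    (hmono : ∀ A B : Set X, A ⊆ B → g A ≤ g B)
    (hspan : ∀ A : Set X, ∀ i ∈ sSpan S A, g (A ∪ {i}) = g A) :
    g Set.univ ≤ sLPentropy S * c := by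
  rcases eq_or_lt_of_le hc with hc0 | hcpos
  · have h1 := f_le_card h0 hsing hsub Set.univ Set.finite_univ
    rw [← hc0] at h1 ⊢
    simpa using h1
  · set f : Set X → ℝ := fun A => g A / c with hf
    have hfeas : sEntFeasible S f := by
      refine ⟨by simp [hf, h0], fun i => ?_, fun A B => ?_, fun A B hAB => ?_, fun A i hi => ?_⟩
      · exact (div_le_one hcpos).mpr (hsing i)
      · simp only [hf]
        rw [← add_div, ← add_div]
        exact div_le_div_of_nonneg_right (hsub A B) hcpos.le |>.trans_eq rfl
      · exact div_le_div_of_nonneg_right (hmono A B hAB) hcpos.le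
      · simp only [hf, hspan A i hi]
    have hmem : f Set.univ ∈ {y : ℝ | ∃ f' : Set X → ℝ, sEntFeasible S f' ∧ y = f' Set.univ} :=
      ⟨f, hfeas, rfl⟩
    have hle : f Set.univ ≤ sLPentropy S := le_csSup (bddAbove_LPset S) hmem
    rw [hf] at hle
    calc g Set.univ = g Set.univ / c * c := by field_simp
    _ ≤ sLPentropy S * c := by
      exact mul_le_mul_of_nonneg_right hle hc


/-- `LP^entropy` is sub-multiplicative under semi-direct product. -/
theorem LPentropy_semidirect_le {X₁ X₂ : Type} [Fintype X₁] [Fintype X₂]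
    (S₁ : SpanoidOn X₁) (S₂ : SpanoidOn X₂) :
    sLPentropy (semidirect S₁ S₂) ≤ sLPentropy S₁ * sLPentropy S₂ := by
  apply csSup_le ⟨0, zero_mem_LPset _⟩
  rintro y ⟨f, ⟨h0, hsing, hsub, hmono, hspan⟩, rfl⟩
  -- step 1: for each i, f ({i} ×ˢ univ) ≤ sLPentropy S₂
  have step1 : ∀ i : X₁,
      f (({i} : Set X₁) ×ˢ (Set.univ : Set X₂)) ≤ sLPentropy S₂ := by
    intro i
    set g : Set X₂ → ℝ := fun B => f (({i} : Set X₁) ×ˢ B) with hg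
    have hfeas : sEntFeasible S₂ g := by
      refine ⟨?_, ?_, ?_, ?_, ?_⟩
      · simp [hg, h0]
      · intro j
        have he : ({i} : Set X₁) ×ˢ ({j} : Set X₂) = {(i,j)} := Set.singleton_prod_singleton
        simpa [hg, he] using hsing (i,j)
      · intro B B'
        have hu : ({i}:Set X₁) ×ˢ (B ∪ B') = {i} ×ˢ B ∪ {i} ×ˢ B' := Set.prod_union
        have hi : ({i}:Set X₁) ×ˢ (B ∩ B') = ({i} ×ˢ B) ∩ ({i} ×ˢ B') := by
          rw [Set.prod_inter_prod]; simp
        simp only [hg, hu, hi]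
        exact hsub _ _
      · intro B B' hBB'
        exact hmono _ _ (Set.prod_mono subset_rfl hBB')
      · intro B j hj
        have hrule : (({i} : Set X₁) ×ˢ B, (i, j)) ∈ semidirect S₁ S₂ :=
          Or.inr ⟨B, i, j, hj, rfl⟩
        have h1 : (i, j) ∈ sSpan (semidirect S₁ S₂) (({i}:Set X₁) ×ˢ B) :=
          sSpan_rule hrule (subset_sSpan _ _)
        have heq : ({i}:Set X₁) ×ˢ (B ∪ {j}) = ({i}:Set X₁) ×ˢ B ∪ {(i,j)} := by
          rw [Set.prod_union, Set.singleton_prod_singleton]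
        simp only [hg, heq]
        exact hspan _ _ h1
    exact le_csSup (bddAbove_LPset S₂) ⟨g, hfeas, rfl⟩
  -- step 2: apply key to h A := f (A ×ˢ univ)
  have hkey := key S₁ (fun A => f (A ×ˢ (Set.univ : Set X₂))) (sLPentropy S₂)
    (sLPentropy_nonneg S₂)
    (by simp [h0]) step1
    (by
      intro A B
      have hu : (A ∪ B) ×ˢ (Set.univ : Set X₂) = A ×ˢ Set.univ ∪ B ×ˢ Set.univ :=
        Set.union_prod
      have hi : (A ∩ B) ×ˢ (Set.univ : Set X₂) = (A ×ˢ Set.univ) ∩ (B ×ˢ Set.univ) := by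
        rw [Set.prod_inter_prod]; simp
      simp only [hu, hi]
      exact hsub _ _)
    (by
      intro A B hAB
      exact hmono _ _ (Set.prod_mono hAB subset_rfl))
    (by
      intro A i hi
      have hu : (A ∪ {i}) ×ˢ (Set.univ : Set X₂)
          = A ×ˢ Set.univ ∪ ({i} : Set X₁) ×ˢ (Set.univ : Set X₂) := Set.union_prod
      simp only [hu]
      refine f_union_spanned hspan _ _ (Set.toFinite _) ?_
      rintro ⟨i', j⟩ ⟨hi', _⟩
      rcases hi' with rfl
      have hrule : (A ×ˢ (Set.univ : Set X₂), (i', j)) ∈ semidirect S₁ S₂ :=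
        Or.inl ⟨A, i', j, hi, rfl⟩
      exact sSpan_rule hrule (subset_sSpan _ _))
  simpa [Set.univ_prod_univ] using hkey
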